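/- Assume G(x,y) does not depend on y, and for every x ∈ X the functions y ↦ f(x,y) and y ↦ g_i(x,y), i = 1,…,q, are convex and continuously differentiable. If the LMFCQ holds at (x,y) for every x ∈ X and every y ∈ S(x), and (x̄,ȳ,z̄) is a global optimal solution of (KKTR), then (x̄,ȳ) is a global optimal solution of the bilevel problem (P). -/

import Mathlib

/-- `Vec k` is the Euclidean space `ℝ^k`. -/
abbrev Vec (k : ℕ) := Fin k → ℝ


open Filter Set Topology

variable {V : Type*} [NormedAddCommGroup V] [NormedSpace ℝ V]

/-- derivative along a ray -/
lemma ray_hasDerivAt {φ : V → ℝ} {φ' : V →L[ℝ] ℝ} {y e : V}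
    (hd : HasFDerivAt φ φ' y) :
    HasDerivAt (fun t : ℝ => φ (y + t • e)) (φ' e) 0 := by
  have hline : HasDerivAt (fun t : ℝ => y + t • e) e 0 :=
    (((hasDerivAt_id (0:ℝ)).smul_const e).const_add y).congr_deriv (one_smul ℝ e)
  have : HasFDerivAt φ φ' ((fun t : ℝ => y + t • e) 0) := by simpa using hd
  exact this.comp_hasDerivAt 0 hline

/-- gradient inequality for convex functions -/
lemma convexOn_grad_le {φ : V → ℝ} (hφ : ConvexOn ℝ Set.univ φ) {y w : V}
    {φ' : V →L[ℝ] ℝ} (hd : HasFDerivAt φ φ' y) :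
    φ' (w - y) ≤ φ w - φ y := by
  set ψ : ℝ → ℝ := fun t => φ (y + t • (w - y)) with hψ
  have hder : HasDerivAt ψ (φ' (w - y)) 0 := ray_hasDerivAt hd
  have hslope : Tendsto (slope ψ 0) (𝓝[>] 0) (𝓝 (φ' (w - y))) :=
    (hasDerivAt_iff_tendsto_slope.1 hder).mono_left
      (nhdsWithin_mono 0 (fun t ht => ne_of_gt ht))
  refine le_of_tendsto hslope ?_
  filter_upwards [Ioc_mem_nhdsGT (by norm_num : (0:ℝ) < 1)] with t ht
  have h01 : y + t • (w - y) = (1 - t) • y + t • w := by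
    rw [smul_sub, sub_smul, one_smul]; abel
  have hc := hφ.2 (mem_univ y) (mem_univ w) (by linarith [ht.2] : 0 ≤ 1 - t)
    (le_of_lt ht.1) (by ring)
  rw [← h01] at hc
  have : ψ t - ψ 0 ≤ t * (φ w - φ y) := by
    simp only [hψ, zero_smul, add_zero]
    calc φ (y + t • (w - y)) - φ y ≤ ((1 - t) * φ y + t * φ w) - φ y := by
          simpa [smul_eq_mul] using sub_le_sub_right hc (φ y)
      _ = t * (φ w - φ y) := by ring
  rw [slope_def_field, sub_zero, div_le_iff₀ ht.1]
  linarith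

/-- Farkas lemma for linear functionals, by induction on the index set. -/
lemma farkas {W : Type*} [AddCommGroup W] [Module ℝ W] {ι : Type*} [DecidableEq ι]
    (s : Finset ι) (a : ι → (W →ₗ[ℝ] ℝ)) (c : W →ₗ[ℝ] ℝ)
    (h : ∀ d, (∀ i ∈ s, a i d ≤ 0) → c d ≤ 0) :
    ∃ z : ι → ℝ, (∀ i, 0 ≤ z i) ∧ (∀ i ∉ s, z i = 0) ∧ c = ∑ i ∈ s, z i • a i := by
  classical
  induction s using Finset.induction_on generalizing a c with
  | empty =>
    refine ⟨fun _ => 0, fun _ => le_rfl, fun _ _ => rfl, ?_⟩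
    have hc : ∀ d, c d = 0 := fun d =>
      le_antisymm (h d (by simp)) (by
        have := h (-d) (by simp); simpa using this)
    ext d; simpa using hc d
  | @insert i₀ s hi₀ IH =>
    by_cases hcase : ∀ d, (∀ i ∈ s, a i d ≤ 0) → c d ≤ 0
    · obtain ⟨z, hz0, hzs, hzc⟩ := IH a c hcase
      refine ⟨z, hz0, fun i hi => hzs i (fun hi' => hi (Finset.mem_insert_of_mem hi')), ?_⟩
      rw [Finset.sum_insert hi₀, hzs i₀ hi₀, zero_smul, zero_add]; exact hzc
    · push_neg at hcase
      obtain ⟨u, hu, hcu⟩ := hcase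
      have hA : 0 < a i₀ u := by
        by_contra hA
        push_neg at hA
        exact absurd (h u (fun i hi => by
          rcases Finset.mem_insert.1 hi with rfl | hi
          · exact hA
          · exact hu i hi)) (not_le.2 hcu)
      set A := a i₀ u with hAdef
      set b : ι → (W →ₗ[ℝ] ℝ) := fun i => a i - (a i u / A) • a i₀ with hb
      set c' : W →ₗ[ℝ] ℝ := c - (c u / A) • a i₀ with hc'
      have hkey : ∀ d, (∀ i ∈ s, b i d ≤ 0) → c' d ≤ 0 := by
        intro d hd
        set d' := d - (a i₀ d / A) • u with hd'
        have hbd : ∀ i, a i d' = a i d - (a i u / A) * a i₀ d := by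
          intro i
          simp only [hd', map_sub, map_smul, smul_eq_mul]
          field_simp
        have h1 : ∀ i ∈ s, a i d' ≤ 0 := by
          intro i hi
          rw [hbd i]
          simpa [hb, smul_eq_mul] using hd i hi
        have h2 : a i₀ d' = 0 := by rw [hbd i₀]; field_simp; simp [hAdef]
        have := h d' (fun i hi => by
          rcases Finset.mem_insert.1 hi with rfl | hi
          · exact le_of_eq h2
          · exact h1 i hi)
        calc c' d = c d' := by
              simp only [hc', hd', map_sub, map_smul, smul_eq_mul, LinearMap.sub_apply,
                LinearMap.smul_apply]
              field_simp
          _ ≤ 0 := this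
      obtain ⟨w, hw0, hws, hwc⟩ := IH b c' hkey
      set μ := (c u - ∑ i ∈ s, w i * a i u) / A with hμ
      have hμ0 : 0 ≤ μ := by
        apply div_nonneg _ (le_of_lt hA)
        have : ∑ i ∈ s, w i * a i u ≤ 0 :=
          Finset.sum_nonpos (fun i hi => mul_nonpos_of_nonneg_of_nonpos (hw0 i) (hu i hi))
        linarith
      refine ⟨fun i => if i = i₀ then μ else w i, ?_, ?_, ?_⟩
      · intro i; by_cases hii : i = i₀ <;> simp [hii, hμ0, hw0 i]
      · intro i hi
        have hi1 : i ≠ i₀ := fun hh => hi (hh ▸ Finset.mem_insert_self i₀ s)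
        have hi2 : i ∉ s := fun hh => hi (Finset.mem_insert_of_mem hh)
        simp [hi1, hws i hi2]
      · rw [Finset.sum_insert hi₀]
        have hsum : ∑ i ∈ s, (if i = i₀ then μ else w i) • a i = ∑ i ∈ s, w i • a i :=
          Finset.sum_congr rfl (fun i hi => by
            have : i ≠ i₀ := fun hh => hi₀ (hh ▸ hi)
            simp [this])
        beta_reduce
        rw [if_pos rfl, hsum]
        have hc2 : c = ∑ i ∈ s, w i • b i + (c u / A) • a i₀ := by
          rw [← hwc, hc']; abel
        rw [hc2]
        have hbexp : ∑ i ∈ s, w i • b i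
            = ∑ i ∈ s, w i • a i - (∑ i ∈ s, w i * (a i u / A)) • a i₀ := by
          simp only [hb, smul_sub, smul_smul, Finset.sum_sub_distrib, Finset.sum_smul]
        rw [hbexp]
        have : (c u / A) - ∑ i ∈ s, w i * (a i u / A) = μ := by
          rw [hμ, sub_div, Finset.sum_div]
          congr 1
          exact Finset.sum_congr rfl (fun i _ => by ring)
        rw [sub_add_eq_add_sub, add_comm, ← sub_add_eq_add_sub]
        rw [← this]; exact congrArg (· + ∑ i ∈ s, w i • a i) (sub_smul _ _ _).symm


lemma sum_convexOn {m q : ℕ} (g : Vec m → Vec q) (z : Fin q → ℝ)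
    (hz : ∀ i, 0 ≤ z i) (hg : ∀ i, ConvexOn ℝ Set.univ (fun y => g y i)) :
    ConvexOn ℝ Set.univ (fun w => ∑ i, z i * g w i) := by
  classical
  induction (Finset.univ : Finset (Fin q)) using Finset.induction_on with
  | empty => simpa using convexOn_const 0 convex_univ
  | @insert i₀ s hi₀ IH =>
    simp only [Finset.sum_insert hi₀]
    exact ((hg i₀).smul (hz i₀)).add IH

lemma kkt_sufficiency {m q : ℕ} (f : Vec m → ℝ) (g : Vec m → Vec q)
    (hfconv : ConvexOn ℝ Set.univ f) (hf : ContDiff ℝ 1 f)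
    (hgconv : ∀ i, ConvexOn ℝ Set.univ (fun y => g y i))
    (hgC1 : ∀ i, ContDiff ℝ 1 (fun y => g y i))
    (y : Vec m) (z : Fin q → ℝ) (hz : ∀ i, 0 ≤ z i)
    (hstat : fderiv ℝ f y + ∑ i, z i • fderiv ℝ (fun y' => g y' i) y = 0)
    (hcomp : ∑ i, z i * g y i = 0) :
    ∀ y', (∀ i, g y' i ≤ 0) → f y ≤ f y' := by
  intro y' hy'
  set L : Vec m → ℝ := fun w => f w + ∑ i, z i * g w i with hL
  have hLconv : ConvexOn ℝ Set.univ L :=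
    hfconv.add (sum_convexOn g z hz hgconv)
  have hLd : HasFDerivAt L (fderiv ℝ f y + ∑ i, z i • fderiv ℝ (fun y' => g y' i) y) y := by
    refine HasFDerivAt.add ?_ ?_
    · exact (hf.differentiable one_ne_zero).differentiableAt.hasFDerivAt
    · exact HasFDerivAt.fun_sum (fun i _ =>
        (((hgC1 i).differentiable one_ne_zero).differentiableAt.hasFDerivAt).const_mul (z i))
  rw [hstat] at hLd
  have := convexOn_grad_le hLconv (w := y') hLd
  simp only [ContinuousLinearMap.zero_apply] at this
  have hLy : L y = f y := by rw [hL]; simp [hcomp]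
  have hLy' : L y' ≤ f y' := by
    have : ∑ i, z i * g y' i ≤ 0 :=
      Finset.sum_nonpos (fun i _ => mul_nonpos_of_nonneg_of_nonpos (hz i) (hy' i))
    simp only [hL]; linarith
  linarith

open Filter Topology in
lemma kkt_necessity {m q : ℕ} (f : Vec m → ℝ) (g : Vec m → Vec q)
    (hf : ContDiff ℝ 1 f) (hgC1 : ∀ i, ContDiff ℝ 1 (fun y => g y i))
    (y : Vec m) (hfeas : ∀ i, g y i ≤ 0)
    (hopt : ∀ y', (∀ i, g y' i ≤ 0) → f y ≤ f y')
    (d : Vec m) (hd : ∀ i, g y i = 0 → fderiv ℝ (fun y' => g y' i) y d < 0) :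
    ∃ z : Fin q → ℝ, (∀ i, 0 ≤ z i) ∧
      (fderiv ℝ f y + ∑ i, z i • fderiv ℝ (fun y' => g y' i) y = 0) ∧
      (∀ i, z i * g y i = 0) := by
  classical
  set Df := fderiv ℝ f y with hDf
  set Dg : Fin q → (Vec m →L[ℝ] ℝ) := fun i => fderiv ℝ (fun y' => g y' i) y with hDg
  have hfd : HasFDerivAt f Df y := (hf.differentiable one_ne_zero).differentiableAt.hasFDerivAt
  have hgd : ∀ i, HasFDerivAt (fun y' => g y' i) (Dg i) y := fun i =>
    ((hgC1 i).differentiable one_ne_zero).differentiableAt.hasFDerivAt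
  -- Step 1: strict feasible directions have nonnegative derivative of f
  have step1 : ∀ e : Vec m, (∀ i, g y i = 0 → Dg i e < 0) → 0 ≤ Df e := by
    intro e he
    have hfe : HasDerivAt (fun t : ℝ => f (y + t • e)) (Df e) 0 := ray_hasDerivAt hfd
    have hfeas' : ∀ᶠ t in 𝓝[>] (0:ℝ), ∀ i, g (y + t • e) i ≤ 0 := by
      rw [eventually_all]
      intro i
      rcases lt_or_eq_of_le (hfeas i) with hlt | heq
      · -- inactive: by continuity
        have hcont : Continuous (fun t : ℝ => g (y + t • e) i) :=
          (hgC1 i).continuous.comp (continuous_const.add (continuous_id.smul continuous_const))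
        have htt : Tendsto (fun t : ℝ => g (y + t • e) i) (𝓝 0) (𝓝 (g y i)) := by
          have := hcont.tendsto (0:ℝ)
          simpa using this
        have := htt.eventually_lt_const hlt
        exact (this.filter_mono nhdsWithin_le_nhds).mono (fun t ht => le_of_lt ht)
      · -- active: slope argument
        have hgi : HasDerivAt (fun t : ℝ => g (y + t • e) i) (Dg i e) 0 :=
          ray_hasDerivAt (hgd i)
        have hslope : Tendsto (slope (fun t : ℝ => g (y + t • e) i) 0) (𝓝[≠] 0)
            (𝓝 (Dg i e)) := hasDerivAt_iff_tendsto_slope.1 hgi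
        have hneg := hslope.eventually_lt_const (he i heq)
        have hmono : (𝓝[>] (0:ℝ)) ≤ 𝓝[≠] 0 :=
          nhdsWithin_mono 0 (fun t ht => ne_of_gt ht)
        filter_upwards [hneg.filter_mono hmono, self_mem_nhdsWithin] with t ht ht0
        have ht0' : (0:ℝ) < t := ht0
        rw [slope_def_field, sub_zero] at ht
        have : g (y + t • e) i - g (y + (0:ℝ) • e) i < 0 := by
          have := (div_lt_iff₀ ht0').1 ht
          simpa using this
        simp only [zero_smul, add_zero] at this
        rw [← heq]
        linarith
    have hge : ∀ᶠ t in 𝓝[>] (0:ℝ), 0 ≤ slope (fun t : ℝ => f (y + t • e)) 0 t := by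
      filter_upwards [hfeas', self_mem_nhdsWithin] with t ht ht0
      have ht0' : (0:ℝ) < t := ht0
      have hfy : f y ≤ f (y + t • e) := hopt _ ht
      rw [slope_def_field, sub_zero]
      apply div_nonneg _ (le_of_lt ht0')
      simpa using hfy
    have hslopef : Tendsto (slope (fun t : ℝ => f (y + t • e)) 0) (𝓝[>] 0) (𝓝 (Df e)) :=
      (hasDerivAt_iff_tendsto_slope.1 hfe).mono_left
        (nhdsWithin_mono 0 (fun t ht => ne_of_gt ht))
    exact ge_of_tendsto hslopef hge
  -- Step 2: weak feasible directions
  have step2 : ∀ e : Vec m, (∀ i, g y i = 0 → Dg i e ≤ 0) → 0 ≤ Df e := by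
    intro e he
    have hε : ∀ ε : ℝ, 0 < ε → 0 ≤ Df e + ε * Df d := by
      intro ε hε
      have := step1 (e + ε • d) (fun i hi => by
        have h1 := he i hi
        have h2 := hd i hi
        rw [hDg] at *
        simp only [map_add, map_smul, smul_eq_mul]
        nlinarith)
      simpa [map_add, map_smul, smul_eq_mul] using this
    by_contra hcon
    push_neg at hcon
    rcases le_or_gt (Df d) 0 with hDd | hDd
    · have := hε 1 one_pos; nlinarith
    · have hpos : 0 < -Df e / (2 * Df d) := div_pos (by linarith) (by linarith)
      have h1 := hε _ hpos
      have h2 : -Df e / (2 * Df d) * Df d = -Df e / 2 := by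
        field_simp
      linarith
  -- Step 3: Farkas
  set s : Finset (Fin q) := Finset.univ.filter (fun i => g y i = 0) with hs
  obtain ⟨z, hz0, hzs, hzc⟩ := farkas s (fun i => (Dg i).toLinearMap) (-Df.toLinearMap)
    (fun e he => by
      have := step2 e (fun i hi => he i (by simp [hs, hi]))
      simpa using this)
  refine ⟨z, hz0, ?_, ?_⟩
  · have hsum : ∑ i ∈ s, z i • Dg i = ∑ i, z i • Dg i := by
      refine Finset.sum_subset (Finset.subset_univ s) (fun i _ hi => ?_)
      rw [hzs i hi, zero_smul]
    ext e
    have happ := LinearMap.ext_iff.1 hzc e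
    simp only [LinearMap.neg_apply, ContinuousLinearMap.coe_coe] at happ
    have : (∑ i ∈ s, z i • (Dg i).toLinearMap) e = (∑ i ∈ s, z i • Dg i) e := by
      simp [ContinuousLinearMap.sum_apply, LinearMap.sum_apply]
    rw [this, hsum] at happ
    simp only [ContinuousLinearMap.add_apply, ContinuousLinearMap.zero_apply]
    linarith [happ]
  · intro i
    by_cases hi : i ∈ s
    · have : g y i = 0 := by simpa [hs] using hi
      rw [this, mul_zero]
    · rw [hzs i hi, zero_mul]

/-- Under lower-level convexity, smoothness and LMFCQ (at every
lower-level optimal point over `X`), a global optimal solution `(x̄, ȳ, z̄)` of the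
KKT reformulation (KKTR) yields a global optimal solution `(x̄, ȳ)` of the bilevel
problem (P). -/
theorem stmt_2
    {n m p q : ℕ} (hn : 0 < n) (hm : 0 < m) (hp : 0 < p) (hq : 0 < q)
    (F : Vec n → Vec m → ℝ) (G : Vec n → Vec m → Vec p)
    (f : Vec n → Vec m → ℝ) (g : Vec n → Vec m → Vec q)
    -- G does not depend on y
    (hGy : ∀ x y y', G x y = G x y')
    -- for every x ∈ X, the lower-level data is convex and C¹ in y
    (hconv : ∀ x : Vec n, (∃ y, ∀ j, G x y j ≤ 0) →
      ConvexOn ℝ Set.univ (f x) ∧ ContDiff ℝ 1 (f x) ∧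
      ∀ i, ConvexOn ℝ Set.univ (fun y => g x y i) ∧ ContDiff ℝ 1 (fun y => g x y i))
    -- standing assumption: S(x) ≠ ∅ for every x ∈ X
    (hS : ∀ x : Vec n, (∃ y, ∀ j, G x y j ≤ 0) →
      ∃ y, (∀ i, g x y i ≤ 0) ∧ ∀ y', (∀ i, g x y' i ≤ 0) → f x y ≤ f x y')
    -- LMFCQ holds at every (x, y) with x ∈ X and y ∈ S(x)
    (hLMFCQ : ∀ x : Vec n, (∃ y, ∀ j, G x y j ≤ 0) →
      ∀ y : Vec m, (∀ i, g x y i ≤ 0) →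
      (∀ y', (∀ i, g x y' i ≤ 0) → f x y ≤ f x y') →
      ∃ d : Vec m, ∀ i, g x y i = 0 → fderiv ℝ (fun y' => g x y' i) y d < 0)
    (xb : Vec n) (yb : Vec m) (zb : Vec q)
    -- (xb, yb, zb) is feasible for (KKTR)
    (hKfeas : (∀ j, G xb yb j ≤ 0) ∧
      (fderiv ℝ (f xb) yb + ∑ i, zb i • fderiv ℝ (fun y' => g xb y' i) yb = 0) ∧
      (∀ i, g xb yb i ≤ 0) ∧ (∀ i, 0 ≤ zb i) ∧ ∑ i, zb i * g xb yb i = 0)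
    -- (xb, yb, zb) is globally optimal for (KKTR)
    (hKopt : ∀ (x : Vec n) (y : Vec m) (z : Vec q), (∀ j, G x y j ≤ 0) →
      (fderiv ℝ (f x) y + ∑ i, z i • fderiv ℝ (fun y' => g x y' i) y = 0) →
      (∀ i, g x y i ≤ 0) → (∀ i, 0 ≤ z i) → (∑ i, z i * g x y i = 0) →
      F xb yb ≤ F x y) :
    -- (xb, yb) is a global optimal solution of (P)
    ((∀ j, G xb yb j ≤ 0) ∧ (∀ i, g xb yb i ≤ 0) ∧
      ∀ y', (∀ i, g xb y' i ≤ 0) → f xb yb ≤ f xb y') ∧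
    ∀ (x : Vec n) (y : Vec m), (∀ j, G x y j ≤ 0) → (∀ i, g x y i ≤ 0) →
      (∀ y', (∀ i, g x y' i ≤ 0) → f x y ≤ f x y') → F xb yb ≤ F x y := by
  obtain ⟨hG, hstat, hgfeas, hz0, hcompsum⟩ := hKfeas
  have hxbX : ∃ y, ∀ j, G xb y j ≤ 0 := ⟨yb, hG⟩
  obtain ⟨hfconv, hfC1, hgcc⟩ := hconv xb hxbX
  have hopt_b : ∀ y', (∀ i, g xb y' i ≤ 0) → f xb yb ≤ f xb y' :=
    kkt_sufficiency (f xb) (g xb) hfconv hfC1 (fun i => (hgcc i).1) (fun i => (hgcc i).2)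
      yb zb hz0 hstat hcompsum
  refine ⟨⟨hG, hgfeas, hopt_b⟩, ?_⟩
  intro x y hGxy hgxy hyopt
  have hxX : ∃ y0, ∀ j, G x y0 j ≤ 0 := ⟨y, hGxy⟩
  obtain ⟨hfc, hf1, hgc⟩ := hconv x hxX
  obtain ⟨d, hd⟩ := hLMFCQ x hxX y hgxy hyopt
  obtain ⟨z, hz, hst, hcomp⟩ :=
    kkt_necessity (f x) (g x) hf1 (fun i => (hgc i).2) y hgxy hyopt d hd
  exact hKopt x y z hGxy hst hgxy hz (Finset.sum_eq_zero (fun i _ => hcomp i))
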